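/- Let F = g_1(x_0,...,x_{m_1}) + g_2(x_{m_1+1},...,x_{m_1+m_2}) be a sum of two homogeneous polynomials of the same degree d in disjoint sets of variables. If the hypersurface V(F) ⊂ ℙ^{m_1+m_2} is smooth, then both hypersurfaces V(g_1 + y^d) ⊂ ℙ^{m_1+1} and V(g_2 + z^d) ⊂ ℙ^{m_2} are smooth. -/

import Mathlib

open MvPolynomial

def IsSmoothHypersurface {σ : Type*} [Fintype σ] [DecidableEq σ]
    (F : MvPolynomial σ ℂ) : Prop :=
  ∀ v : σ → ℂ, (∀ i, eval v (pderiv i F) = 0) → v = 0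

lemma pderiv_rename_ne {σ τ : Type*} [DecidableEq τ] {f : σ → τ} {p : MvPolynomial σ ℂ}
    {j : τ} (h : ∀ x, f x ≠ j) : pderiv j (rename f p) = 0 := by
  apply pderiv_eq_zero_of_notMem_vars
  intro hj
  obtain ⟨x, -, hx⟩ := Finset.mem_image.mp (vars_rename f p hj)
  exact h x hx

lemma pderiv_of_isHomogeneous_zero {σ : Type*} [DecidableEq σ] {g : MvPolynomial σ ℂ}
    (hg : g.IsHomogeneous 0) (i : σ) : pderiv i g = 0 := by
  conv_lhs => rw [g.as_sum]
  rw [map_sum]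
  refine Finset.sum_eq_zero fun s hs => ?_
  have hdeg : s.degree = 0 := by
    by_contra h
    exact (mem_support_iff.mp hs) (hg.coeff_eq_zero h)
  have hs0 : s = 0 := (Finsupp.degree_eq_zero_iff s).mp hdeg
  subst hs0
  simp [pderiv_monomial]

lemma eval_zero_pderiv {σ : Type*} [DecidableEq σ] {g : MvPolynomial σ ℂ} {d : ℕ}
    (hg : g.IsHomogeneous d) (hd : d ≠ 1) (i : σ) :
    eval (0 : σ → ℂ) (pderiv i g) = 0 := by
  conv_lhs => rw [g.as_sum]
  rw [map_sum, map_sum]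
  refine Finset.sum_eq_zero fun s hs => ?_
  rw [pderiv_monomial, eval_zero, constantCoeff_monomial]
  split_ifs with h0
  · by_cases hsi : s i = 0
    · simp [hsi]
    · exfalso
      have hle : s ≤ Finsupp.single i 1 := tsub_eq_zero_iff_le.mp h0
      have hseq : s = Finsupp.single i 1 := by
        ext j
        rcases eq_or_ne j i with rfl | hji
        · have h1 : s j ≤ 1 := by simpa using Finsupp.le_def.mp hle j
          have h2 : 1 ≤ s j := Nat.one_le_iff_ne_zero.mpr hsi
          simp [le_antisymm h1 h2]
        · have := Finsupp.le_def.mp hle j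
          simp [Finsupp.single_eq_of_ne' (Ne.symm hji)] at this ⊢
          omega
      have hdeg : s.degree = d := by
        by_contra h
        exact (mem_support_iff.mp hs) (hg.coeff_eq_zero h)
      rw [hseq] at hdeg
      have : Finsupp.degree (Finsupp.single i 1) = 1 := by
        exact Finsupp.degree_single i 1
      exact hd (by omega)
  · rfl

/-- If `g₁ + g₂` (in disjoint variable sets, both homogeneous of degree `d`) defines a
smooth hypersurface, then so do `g₁ + y^d` and `g₂ + z^d`. -/
theorem smooth_sum_implies_smooth_pieces (m₁ m₂ d : ℕ)
    (g₁ : MvPolynomial (Fin (m₁ + 1)) ℂ) (g₂ : MvPolynomial (Fin m₂) ℂ)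
    (hg₁ : g₁.IsHomogeneous d) (hg₂ : g₂.IsHomogeneous d)
    (hsm : IsSmoothHypersurface
      (rename (Sum.inl : Fin (m₁ + 1) → Fin (m₁ + 1) ⊕ Fin m₂) g₁ +
       rename (Sum.inr : Fin m₂ → Fin (m₁ + 1) ⊕ Fin m₂) g₂)) :
    IsSmoothHypersurface
      (rename (Sum.inl : Fin (m₁ + 1) → Fin (m₁ + 1) ⊕ Unit) g₁ +
        X (Sum.inr ()) ^ d) ∧
    IsSmoothHypersurface
      (rename (Sum.inl : Fin m₂ → Fin m₂ ⊕ Unit) g₂ +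
        X (Sum.inr ()) ^ d) := by
  have hd0 : d ≠ 0 := by
    rintro rfl
    have h1 := hsm (fun _ => 1) ?_
    · exact one_ne_zero (congr_fun h1 (Sum.inl 0))
    · rintro (x | y) <;> rw [map_add]
      · rw [pderiv_rename Sum.inl_injective, pderiv_of_isHomogeneous_zero hg₁,
          pderiv_rename_ne (fun z => Sum.inr_ne_inl)]
        simp
      · rw [pderiv_rename Sum.inr_injective, pderiv_of_isHomogeneous_zero hg₂,
          pderiv_rename_ne (fun z => Sum.inl_ne_inr)]
        simp
  constructor
  · rcases eq_or_ne d 1 with rfl | hd1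
    · intro v hv
      exfalso
      have h := hv (Sum.inr ())
      rw [map_add, pderiv_rename_ne (fun z => Sum.inl_ne_inr), pow_one,
        pderiv_X_self] at h
      simp at h
    · intro v hv
      have hw0 : (Sum.elim (v ∘ Sum.inl) 0 : Fin (m₁ + 1) ⊕ Fin m₂ → ℂ) = 0 := by
        apply hsm
        rintro (x | y) <;> rw [map_add]
        · have h := hv (Sum.inl x)
          rw [map_add, pderiv_rename Sum.inl_injective, pderiv_pow,
            pderiv_X_of_ne Sum.inr_ne_inl, mul_zero, add_zero,
            eval_rename] at h
          rw [pderiv_rename Sum.inl_injective,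
            pderiv_rename_ne (fun z => Sum.inr_ne_inl)]
          simp only [zero_add, add_zero, eval_rename, Sum.elim_comp_inl]
          exact h
        · rw [pderiv_rename Sum.inr_injective,
            pderiv_rename_ne (fun z => Sum.inl_ne_inr)]
          simp only [zero_add, add_zero, eval_rename, Sum.elim_comp_inr]
          exact eval_zero_pderiv hg₂ hd1 y
      funext i
      rcases i with x | u
      · exact congr_fun hw0 (Sum.inl x)
      · have h := hv (Sum.inr ())
        rw [map_add, pderiv_rename_ne (fun z => Sum.inl_ne_inr), pderiv_pow,
          pderiv_X_self, mul_one] at h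
        simp only [map_zero, zero_add, map_mul, map_pow, eval_X, map_natCast] at h
        have hd' : (d : ℂ) ≠ 0 := Nat.cast_ne_zero.mpr hd0
        have h2 := (mul_eq_zero.mp h).resolve_left hd'
        have := pow_eq_zero_iff (by omega : d - 1 ≠ 0) |>.mp h2
        cases u; exact this
  · rcases eq_or_ne d 1 with rfl | hd1
    · intro v hv
      exfalso
      have h := hv (Sum.inr ())
      rw [map_add, pderiv_rename_ne (fun z => Sum.inl_ne_inr), pow_one,
        pderiv_X_self] at h
      simp at h
    · intro v hv
      have hw0 : (Sum.elim 0 (v ∘ Sum.inl) : Fin (m₁ + 1) ⊕ Fin m₂ → ℂ) = 0 := by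
        apply hsm
        rintro (x | y) <;> rw [map_add]
        · rw [pderiv_rename Sum.inl_injective,
            pderiv_rename_ne (fun z => Sum.inr_ne_inl)]
          simp only [zero_add, add_zero, eval_rename, Sum.elim_comp_inl]
          exact eval_zero_pderiv hg₁ hd1 x
        · have h := hv (Sum.inl y)
          rw [map_add, pderiv_rename Sum.inl_injective, pderiv_pow,
            pderiv_X_of_ne Sum.inr_ne_inl, mul_zero, add_zero,
            eval_rename] at h
          rw [pderiv_rename Sum.inr_injective,
            pderiv_rename_ne (fun z => Sum.inl_ne_inr)]
          simp only [zero_add, add_zero, eval_rename, Sum.elim_comp_inr]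
          exact h
      funext i
      rcases i with x | u
      · exact congr_fun hw0 (Sum.inr x)
      · have h := hv (Sum.inr ())
        rw [map_add, pderiv_rename_ne (fun z => Sum.inl_ne_inr), pderiv_pow,
          pderiv_X_self, mul_one] at h
        simp only [map_zero, zero_add, map_mul, map_pow, eval_X, map_natCast] at h
        have hd' : (d : ℂ) ≠ 0 := Nat.cast_ne_zero.mpr hd0
        have h2 := (mul_eq_zero.mp h).resolve_left hd'
        have := pow_eq_zero_iff (by omega : d - 1 ≠ 0) |>.mp h2
        cases u; exact this
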